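/- The partial transpose ρ₆₆^{T_B} of ρ₆₆ has rank 6. -/

import Mathlib

open Matrix ComplexOrder

noncomputable def N66 : Matrix (Fin 9) (Fin 9) ℂ :=
  !![1, 0, 0, 0, 0, 0, 0, 0, -1;
     0, 2, 0, -1, 0, 0, 0, 0, 0;
     0, 0, 1, 0, 0, 0, 1, 0, 0;
     0, -1, 0, 1, 0, 0, 0, 0, 1;
     0, 0, 0, 0, 1, 0, 1, 0, 0;
     0, 0, 0, 0, 0, 1, 0, -1, 0;
     0, 0, 1, 0, 1, 0, 2, 0, 0;
     0, 0, 0, 0, 0, -1, 0, 1, 0;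
     -1, 0, 0, 1, 0, 0, 0, 0, 3]

/-- The index map `(i, j) ↦ 3 i + j` from `Fin 3 × Fin 3` to `Fin 9`. -/
def idx (p : Fin 3 × Fin 3) : Fin 9 :=
  ⟨3 * p.1.val + p.2.val, by have h1 := p.1.isLt; have h2 := p.2.isLt; omega⟩

/-- The state `ρ₆₆`, viewed as an operator on `ℂ³ ⊗ ℂ³`. -/
noncomputable def rho66 : Matrix (Fin 3 × Fin 3) (Fin 3 × Fin 3) ℂ :=
  fun p q => (1 / 13 : ℂ) * N66 (idx p) (idx q)

/-- The partial transpose on the second factor: `(ρ^{T_B})_{(i,j),(k,l)} = ρ_{(i,l),(k,j)}`. -/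
noncomputable def ptrans (ρ : Matrix (Fin 3 × Fin 3) (Fin 3 × Fin 3) ℂ) :
    Matrix (Fin 3 × Fin 3) (Fin 3 × Fin 3) ℂ :=
  fun p q => ρ (p.1, q.2) (q.1, p.2)


section AuxVec
variable {α : Type*} {m : ℕ}
lemma cons_val_three' (x : α) (u : Fin (m+3) → α) :
    vecCons x u 3 = vecHead (vecTail (vecTail u)) := rfl
lemma cons_val_four' (x : α) (u : Fin (m+4) → α) :
    vecCons x u 4 = vecHead (vecTail (vecTail (vecTail u))) := rfl
lemma cons_val_five' (x : α) (u : Fin (m+5) → α) :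
    vecCons x u 5 = vecHead (vecTail (vecTail (vecTail (vecTail u)))) := rfl
lemma cons_val_six' (x : α) (u : Fin (m+6) → α) :
    vecCons x u 6 = vecHead (vecTail (vecTail (vecTail (vecTail (vecTail u))))) := rfl
lemma cons_val_seven' (x : α) (u : Fin (m+7) → α) :
    vecCons x u 7 = vecHead (vecTail (vecTail (vecTail (vecTail (vecTail (vecTail u)))))) := rfl
lemma cons_val_eight' (x : α) (u : Fin (m+8) → α) :
    vecCons x u 8 = vecHead (vecTail (vecTail (vecTail (vecTail (vecTail (vecTail (vecTail u))))))) := rfl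
end AuxVec

noncomputable def AQ : Matrix (Fin 9) (Fin 6) ℂ :=
  !![1, 0, 0, 0, 0, 0;
     0, 1, 0, 0, 0, 0;
     0, 0, 1, 0, 0, 0;
     0, 0, 0, 1, 0, 0;
     -1, 0, 0, 0, 0, 0;
     0, 0, 0, 0, 1, 0;
     0, 0, -1, 0, 1, 0;
     0, 0, 0, 1, 0, 0;
     0, 0, 0, 0, 0, 1]

noncomputable def BQ : Matrix (Fin 6) (Fin 9) ℂ :=
  !![(1/13), 0, 0, 0, (-1/13), 0, 0, 0, (1/13);
     0, (2/13), 0, 0, 0, 0, 0, 0, 0;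
     0, 0, (1/13), 0, 0, 0, (-1/13), 0, 0;
     0, 0, 0, (1/13), 0, 0, 0, (1/13), 0;
     0, 0, 0, 0, 0, (1/13), (1/13), 0, 0;
     (1/13), 0, 0, 0, (-1/13), 0, 0, 0, (3/13)]

noncomputable def LQ : Matrix (Fin 6) (Fin 9) ℂ :=
  !![1, 0, 0, 0, 0, 0, 0, 0, 0;
     0, 1, 0, 0, 0, 0, 0, 0, 0;
     0, 0, 1, 0, 0, 0, 0, 0, 0;
     0, 0, 0, 1, 0, 0, 0, 0, 0;
     0, 0, 0, 0, 0, 1, 0, 0, 0;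
     0, 0, 0, 0, 0, 0, 0, 0, 1]

noncomputable def RQ : Matrix (Fin 9) (Fin 6) ℂ :=
  !![(39/2), 0, 0, 0, 0, (-13/2);
     0, (13/2), 0, 0, 0, 0;
     0, 0, 13, 0, 0, 0;
     0, 0, 0, 13, 0, 0;
     0, 0, 0, 0, 0, 0;
     0, 0, 0, 0, 13, 0;
     0, 0, 0, 0, 0, 0;
     0, 0, 0, 0, 0, 0;
     (-13/2), 0, 0, 0, 0, (13/2)]

noncomputable def Amat : Matrix (Fin 3 × Fin 3) (Fin 6) ℂ := fun p a => AQ (idx p) a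
noncomputable def Bmat : Matrix (Fin 6) (Fin 3 × Fin 3) ℂ := fun a q => BQ a (idx q)
noncomputable def Lmat : Matrix (Fin 6) (Fin 3 × Fin 3) ℂ := fun a q => LQ a (idx q)
noncomputable def Rmat : Matrix (Fin 3 × Fin 3) (Fin 6) ℂ := fun p a => RQ (idx p) a

lemma idx_zero : idx 0 = 0 := rfl
lemma idx_one : idx 1 = 4 := rfl
lemma idx_00 : idx ((0 : Fin 3), (0 : Fin 3)) = (0 : Fin 9) := rfl
lemma idx_01 : idx ((0 : Fin 3), (1 : Fin 3)) = (1 : Fin 9) := rfl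
lemma idx_02 : idx ((0 : Fin 3), (2 : Fin 3)) = (2 : Fin 9) := rfl
lemma idx_10 : idx ((1 : Fin 3), (0 : Fin 3)) = (3 : Fin 9) := rfl
lemma idx_11 : idx ((1 : Fin 3), (1 : Fin 3)) = (4 : Fin 9) := rfl
lemma idx_12 : idx ((1 : Fin 3), (2 : Fin 3)) = (5 : Fin 9) := rfl
lemma idx_20 : idx ((2 : Fin 3), (0 : Fin 3)) = (6 : Fin 9) := rfl
lemma idx_21 : idx ((2 : Fin 3), (1 : Fin 3)) = (7 : Fin 9) := rfl
lemma idx_22 : idx ((2 : Fin 3), (2 : Fin 3)) = (8 : Fin 9) := rfl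

noncomputable def PQ : Matrix (Fin 9) (Fin 9) ℂ :=
  !![(1/13), 0, 0, 0, (-1/13), 0, 0, 0, (1/13);
     0, (2/13), 0, 0, 0, 0, 0, 0, 0;
     0, 0, (1/13), 0, 0, 0, (-1/13), 0, 0;
     0, 0, 0, (1/13), 0, 0, 0, (1/13), 0;
     (-1/13), 0, 0, 0, (1/13), 0, 0, 0, (-1/13);
     0, 0, 0, 0, 0, (1/13), (1/13), 0, 0;
     0, 0, (-1/13), 0, 0, (1/13), (2/13), 0, 0;
     0, 0, 0, (1/13), 0, 0, 0, (1/13), 0;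
     (1/13), 0, 0, 0, (-1/13), 0, 0, 0, (3/13)]

section AuxConst
variable {α : Type*} {m : ℕ}
lemma vecHead_const (x : α) : vecHead (fun _ : Fin (m+1) => x) = x := rfl
lemma vecTail_const (x : α) : vecTail (fun _ : Fin (m+2) => x) = fun _ => x := rfl
end AuxConst

/-- `idx` as an equivalence. -/
def eIdx : (Fin 3 × Fin 3) ≃ Fin 9 where
  toFun := idx
  invFun i := (⟨i.val / 3, by omega⟩, ⟨i.val % 3, by omega⟩)
  left_inv := by decide
  right_inv := by decide

lemma mul_idx (X : Matrix (Fin 6) (Fin 9) ℂ) (Y : Matrix (Fin 9) (Fin 6) ℂ) :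
    (Matrix.of fun a q => X a (idx q)) * (Matrix.of fun p b => Y (idx p) b) = X * Y := by
  ext a b
  simp only [Matrix.mul_apply, Matrix.of_apply]
  exact Fintype.sum_equiv eIdx _ _ (fun p => rfl)

set_option maxHeartbeats 2000000 in
lemma hQ : AQ * BQ = PQ := by
  ext i j
  fin_cases i <;> fin_cases j <;>
    norm_num [AQ, BQ, PQ, Matrix.mul_apply, Fin.sum_univ_six, vecHead_const, vecTail_const,
      Matrix.cons_val_two, cons_val_three', cons_val_four', cons_val_five', cons_val_six', cons_val_seven', cons_val_eight']

set_option maxHeartbeats 2000000 in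
lemma hLA9 : LQ * AQ = 1 := by
  ext i j
  fin_cases i <;> fin_cases j <;>
    norm_num [LQ, AQ, Matrix.mul_apply, Fin.sum_univ_succ, Matrix.one_apply, Fin.ext_iff,
      vecHead_const, vecTail_const,
      cons_val_five', cons_val_six', cons_val_seven', cons_val_eight']

set_option maxHeartbeats 2000000 in
lemma hBR9 : BQ * RQ = 1 := by
  ext i j
  fin_cases i <;> fin_cases j <;>
    norm_num [BQ, RQ, Matrix.mul_apply, Fin.sum_univ_succ, Matrix.one_apply, Fin.ext_iff,
      vecHead_const, vecTail_const,
      cons_val_five', cons_val_six', cons_val_seven', cons_val_eight']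


def tau (i j : Fin 9) : Fin 9 := ⟨3 * (i.val / 3) + j.val % 3, by omega⟩

lemma idx_tau : ∀ p q : Fin 3 × Fin 3, idx (p.1, q.2) = tau (idx p) (idx q) := by decide

set_option maxHeartbeats 2000000 in
lemma key9 : ∀ i j : Fin 9, (1/13 : ℂ) * N66 (tau i j) (tau j i) = PQ i j := by
  intro i j
  fin_cases i <;> fin_cases j <;>
    norm_num [N66, PQ, tau,
      vecHead_const, vecTail_const,
      cons_val_five', cons_val_six', cons_val_seven', cons_val_eight']

lemma hPt : ptrans rho66 = Matrix.of fun p q => PQ (idx p) (idx q) := by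
  ext p q
  show (1 / 13 : ℂ) * N66 (idx (p.1, q.2)) (idx (q.1, p.2)) = PQ (idx p) (idx q)
  rw [idx_tau p q, idx_tau q p]
  exact key9 (idx p) (idx q)

lemma hAB : ptrans rho66 = Amat * Bmat := by
  rw [hPt, ← hQ]
  ext p q
  simp only [Matrix.mul_apply, Matrix.of_apply, Amat, Bmat]

lemma hLA : Lmat * Amat = 1 := by
  have : Lmat * Amat = LQ * AQ := mul_idx LQ AQ
  rw [this, hLA9]

lemma hBR : Bmat * Rmat = 1 := by
  have : Bmat * Rmat = BQ * RQ := mul_idx BQ RQ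
  rw [this, hBR9]

/-- The partial transpose of `ρ₆₆` has rank 6. -/
theorem rho66_ptrans_rank : (ptrans rho66).rank = 6 := by
  apply le_antisymm
  · calc (ptrans rho66).rank = (Amat * Bmat).rank := by rw [hAB]
      _ ≤ Amat.rank := Matrix.rank_mul_le_left _ _
      _ ≤ Fintype.card (Fin 6) := Matrix.rank_le_card_width _
      _ = 6 := by simp
  · have e1 : Lmat * (ptrans rho66 * Rmat) = 1 := by
      rw [hAB, Matrix.mul_assoc, hBR, Matrix.mul_one, hLA]
    calc (6:ℕ) = (1 : Matrix (Fin 6) (Fin 6) ℂ).rank := by simp [Matrix.rank_one]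
      _ = (Lmat * (ptrans rho66 * Rmat)).rank := by rw [e1]
      _ ≤ (ptrans rho66 * Rmat).rank := Matrix.rank_mul_le_right _ _
      _ ≤ (ptrans rho66).rank := Matrix.rank_mul_le_left _ _
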